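/- Let n ≡ 2 (mod 4) with n > 2 (so n ≥ 6), and let T ∈ SU(n) be a reversible element that cannot be written as a product of two involutions in SU(n). Then T can be written as a product of three involutions in SU(n); that is, there exist I₁, I₂, I₃ ∈ SU(n) with I₁² = I₂² = I₃² = 1 and T = I₁I₂I₃. -/

import Mathlib

open Module.End Submodule LinearMap
open scoped Matrix ComplexConjugate

namespace SU3Inv

variable {E : Type*} [NormedAddCommGroup E] [InnerProductSpace ℂ E]
variable {U : E →ₗ[ℂ] E}

local notation "⟪" x ", " y "⟫" => @inner ℂ _ _ x y

/-- eigenvalues of an inner-product-preserving map are unimodular -/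
theorem conj_mul_self_eigenvalue (hU : ∀ x y : E, ⟪U x, U y⟫ = ⟪x, y⟫)
    {μ : ℂ} {v : E} (hv : v ∈ eigenspace U μ) (hv0 : v ≠ 0) :
    (starRingEnd ℂ) μ * μ = 1 := by
  rw [mem_eigenspace_iff] at hv
  have h := hU v v
  rw [hv, inner_smul_left, inner_smul_right, ← mul_assoc] at h
  have hvv : ⟪v, v⟫ ≠ 0 := inner_self_ne_zero.mpr hv0
  exact mul_right_cancel₀ hvv (by rw [one_mul]; exact h)

theorem orthogonalFamily_eigenspaces (hU : ∀ x y : E, ⟪U x, U y⟫ = ⟪x, y⟫) :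
    OrthogonalFamily ℂ (fun μ => eigenspace U μ) fun μ => (eigenspace U μ).subtypeₗᵢ := by
  rintro μ ν hμν ⟨v, hv⟩ ⟨w, hw⟩
  by_cases hv' : v = 0
  · simp [hv']
  simp only [Submodule.coe_subtypeₗᵢ, Submodule.coe_subtype]
  have hμ1 : (starRingEnd ℂ) μ * μ = 1 := conj_mul_self_eigenvalue hU hv hv'
  rw [mem_eigenspace_iff] at hv hw
  have h := hU v w
  rw [hv, hw, inner_smul_left, inner_smul_right, ← mul_assoc] at h
  by_contra hvw
  have : (starRingEnd ℂ) μ * ν = 1 := mul_right_cancel₀ hvw (by rw [one_mul]; exact h)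
  have : μ = ν := by
    have hμ0 : (starRingEnd ℂ) μ ≠ 0 := fun h0 => by simp [h0] at hμ1
    exact mul_left_cancel₀ hμ0 (hμ1.trans this.symm)
  exact hμν this

theorem invariant_orthogonalComplement_eigenspace
    (hU : ∀ x y : E, ⟪U x, U y⟫ = ⟪x, y⟫) (μ : ℂ)
    (v : E) (hv : v ∈ (eigenspace U μ)ᗮ) : U v ∈ (eigenspace U μ)ᗮ := by
  intro w hw
  by_cases hw0 : w = 0
  · simp [hw0]
  have hμ1 : (starRingEnd ℂ) μ * μ = 1 := conj_mul_self_eigenvalue hU hw hw0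
  have hμ0 : μ ≠ 0 := fun h0 => by simp [h0] at hμ1
  have hUw : U (μ⁻¹ • w) = w := by
    rw [map_smul, mem_eigenspace_iff.mp hw, smul_smul, inv_mul_cancel₀ hμ0, one_smul]
  calc ⟪w, U v⟫ = ⟪U (μ⁻¹ • w), U v⟫ := by rw [hUw]
    _ = ⟪μ⁻¹ • w, v⟫ := hU _ _
    _ = (starRingEnd ℂ) μ⁻¹ * ⟪w, v⟫ := by rw [inner_smul_left]
    _ = 0 := by rw [hv w hw, mul_zero]

theorem orthogonalComplement_iSup_eigenspaces_invariant
    (hU : ∀ x y : E, ⟪U x, U y⟫ = ⟪x, y⟫)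
    ⦃v : E⦄ (hv : v ∈ (⨆ μ, eigenspace U μ)ᗮ) : U v ∈ (⨆ μ, eigenspace U μ)ᗮ := by
  rw [← Submodule.iInf_orthogonal] at hv ⊢
  exact U.iInf_invariant (invariant_orthogonalComplement_eigenspace hU) v hv

variable [FiniteDimensional ℂ E]

theorem orthogonalComplement_iSup_eigenspaces_eq_bot
    (hU : ∀ x y : E, ⟪U x, U y⟫ = ⟪x, y⟫) :
    (⨆ μ, eigenspace U μ)ᗮ = ⊥ := by
  by_contra h
  haveI : Nontrivial ((⨆ μ, eigenspace U μ)ᗮ : Submodule ℂ E) :=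
    Submodule.nontrivial_iff_ne_bot.mpr h
  obtain ⟨μ, hμ⟩ :=
    Module.End.exists_eigenvalue (U.restrict (orthogonalComplement_iSup_eigenspaces_invariant hU))
  have : eigenspace (U.restrict (orthogonalComplement_iSup_eigenspaces_invariant hU)) μ = ⊥ := by
    refine eigenspace_restrict_eq_bot (orthogonalComplement_iSup_eigenspaces_invariant hU) ?_
    have H₂ : eigenspace U μ ⟂ (⨆ μ, eigenspace U μ)ᗮ :=
      (Submodule.isOrtho_orthogonal_right _).mono_left (le_iSup _ _)
    exact H₂.disjoint
  exact hμ this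

theorem orthogonalComplement_iSup_eigenspaces_eq_bot'
    (hU : ∀ x y : E, ⟪U x, U y⟫ = ⟪x, y⟫) :
    (⨆ μ : Eigenvalues U, eigenspace U μ)ᗮ = ⊥ :=
  show (⨆ μ : { μ // eigenspace U μ ≠ ⊥ }, eigenspace U μ)ᗮ = ⊥ by
    rw [iSup_ne_bot_subtype, orthogonalComplement_iSup_eigenspaces_eq_bot hU]

theorem orthogonalFamily_eigenspaces' (hU : ∀ x y : E, ⟪U x, U y⟫ = ⟪x, y⟫) :
    OrthogonalFamily ℂ (fun μ : Eigenvalues U => eigenspace U μ) fun μ =>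
      (eigenspace U μ).subtypeₗᵢ :=
  (orthogonalFamily_eigenspaces hU).comp Subtype.coe_injective

theorem direct_sum_isInternal (hU : ∀ x y : E, ⟪U x, U y⟫ = ⟪x, y⟫) :
    DirectSum.IsInternal fun μ : Eigenvalues U => eigenspace U μ :=
  (orthogonalFamily_eigenspaces' hU).isInternal_iff.mpr
    (orthogonalComplement_iSup_eigenspaces_eq_bot' hU)

variable {n : ℕ} (hn : Module.finrank ℂ E = n)

/-- orthonormal basis of eigenvectors of an inner-product preserving endomorphism -/
noncomputable def eigBasis (hU : ∀ x y : E, ⟪U x, U y⟫ = ⟪x, y⟫) :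
    OrthonormalBasis (Fin n) ℂ E :=
  (direct_sum_isInternal hU).subordinateOrthonormalBasis hn (orthogonalFamily_eigenspaces' hU)

/-- eigenvalues corresponding to `eigBasis` -/
noncomputable def eigVals (hU : ∀ x y : E, ⟪U x, U y⟫ = ⟪x, y⟫) (i : Fin n) : ℂ :=
  ((direct_sum_isInternal hU).subordinateOrthonormalBasisIndex hn i
    (orthogonalFamily_eigenspaces' hU)).val

theorem apply_eigBasis (hU : ∀ x y : E, ⟪U x, U y⟫ = ⟪x, y⟫) (i : Fin n) :
    U (eigBasis hn hU i) = eigVals hn hU i • eigBasis hn hU i := by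
  rw [eigBasis, eigVals, ← mem_eigenspace_iff]
  exact (direct_sum_isInternal hU).subordinateOrthonormalBasis_subordinate hn i
    (orthogonalFamily_eigenspaces' hU)

end SU3Inv
namespace SU3Inv



variable {n : ℕ} {T : Matrix (Fin n) (Fin n) ℂ}

theorem inner_preserving_of_unitary (hT : T ∈ Matrix.unitaryGroup (Fin n) ℂ)
    (x y : EuclideanSpace ℂ (Fin n)) :
    @inner ℂ _ _ (Matrix.toEuclideanLin T x) (Matrix.toEuclideanLin T y) = @inner ℂ _ _ x y := by
  have h1 : (Matrix.toEuclideanLin Tᴴ).comp (Matrix.toEuclideanLin T)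
      = Matrix.toEuclideanLin (Tᴴ * T) := by
    ext z
    simp [Matrix.toEuclideanLin_apply, Matrix.mulVec_mulVec]
  calc @inner ℂ _ _ (Matrix.toEuclideanLin T x) (Matrix.toEuclideanLin T y)
      = @inner ℂ _ _ x (LinearMap.adjoint (Matrix.toEuclideanLin T) (Matrix.toEuclideanLin T y)) := by
        rw [LinearMap.adjoint_inner_right]
    _ = @inner ℂ _ _ x (Matrix.toEuclideanLin (Tᴴ * T) y) := by
        rw [← Matrix.toEuclideanLin_conjTranspose_eq_adjoint]
        rw [← h1]; rfl
    _ = @inner ℂ _ _ x y := by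
        rw [show Tᴴ * T = 1 from Matrix.mem_unitaryGroup_iff'.mp hT]
        simp [Matrix.toEuclideanLin_apply]

noncomputable def diagQ (hT : T ∈ Matrix.unitaryGroup (Fin n) ℂ) : Matrix (Fin n) (Fin n) ℂ :=
  (EuclideanSpace.basisFun (Fin n) ℂ).toBasis.toMatrix
    (eigBasis finrank_euclideanSpace_fin (inner_preserving_of_unitary hT)).toBasis

noncomputable def diagD (hT : T ∈ Matrix.unitaryGroup (Fin n) ℂ) : Fin n → ℂ :=
  eigVals finrank_euclideanSpace_fin (inner_preserving_of_unitary hT)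

theorem diagQ_mem (hT : T ∈ Matrix.unitaryGroup (Fin n) ℂ) :
    diagQ hT ∈ Matrix.unitaryGroup (Fin n) ℂ :=
  (EuclideanSpace.basisFun (Fin n) ℂ).toMatrix_orthonormalBasis_mem_unitary
    (eigBasis finrank_euclideanSpace_fin (inner_preserving_of_unitary hT))

theorem diagQ_apply (hT : T ∈ Matrix.unitaryGroup (Fin n) ℂ) (i j : Fin n) :
    diagQ hT i j = (eigBasis finrank_euclideanSpace_fin (inner_preserving_of_unitary hT) j) i :=
  rfl

theorem mulVec_eigBasis' (hT : T ∈ Matrix.unitaryGroup (Fin n) ℂ) (j k : Fin n) :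
    (∑ l, T k l * (eigBasis finrank_euclideanSpace_fin (inner_preserving_of_unitary hT) j) l)
      = diagD hT j * (eigBasis finrank_euclideanSpace_fin (inner_preserving_of_unitary hT) j) k := by
  have h := apply_eigBasis finrank_euclideanSpace_fin (inner_preserving_of_unitary hT) j
  have h2 := congrArg (fun v : EuclideanSpace ℂ (Fin n) => v k) h
  simpa [Matrix.toEuclideanLin_apply, Matrix.mulVec, dotProduct, diagD] using h2

theorem mul_diagQ (hT : T ∈ Matrix.unitaryGroup (Fin n) ℂ) :
    T * diagQ hT = diagQ hT * Matrix.diagonal (diagD hT) := by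
  ext i j
  rw [Matrix.mul_diagonal, Matrix.mul_apply]
  simp only [diagQ_apply]
  rw [mulVec_eigBasis' hT j i, mul_comm]

theorem star_mul_self_mul_eq_diagonal (hT : T ∈ Matrix.unitaryGroup (Fin n) ℂ) :
    star (diagQ hT) * T * diagQ hT = Matrix.diagonal (diagD hT) := by
  rw [mul_assoc, mul_diagQ hT, ← mul_assoc,
    show star (diagQ hT) * diagQ hT = 1 from Matrix.mem_unitaryGroup_iff'.mp (diagQ_mem hT),
    one_mul]

theorem unitary_spectral_theorem (hT : T ∈ Matrix.unitaryGroup (Fin n) ℂ) :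
    T = diagQ hT * Matrix.diagonal (diagD hT) * star (diagQ hT) := by
  have hQ : diagQ hT * star (diagQ hT) = 1 := Matrix.mem_unitaryGroup_iff.mp (diagQ_mem hT)
  calc T = (diagQ hT * star (diagQ hT)) * T * (diagQ hT * star (diagQ hT)) := by
        rw [hQ, one_mul, mul_one]
    _ = diagQ hT * (star (diagQ hT) * T * diagQ hT) * star (diagQ hT) := by
        simp only [mul_assoc]
    _ = diagQ hT * Matrix.diagonal (diagD hT) * star (diagQ hT) := by
        rw [star_mul_self_mul_eq_diagonal]

end SU3Inv

namespace SU3Inv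

open Matrix in
/-- monomial matrix attached to a permutation and coefficients -/
def mono {n : ℕ} (π : Equiv.Perm (Fin n)) (c : Fin n → ℂ) : Matrix (Fin n) (Fin n) ℂ :=
  Matrix.of fun i j => if j = π i then c i else 0

namespace mono

variable {n : ℕ} (π τ : Equiv.Perm (Fin n)) (c c' : Fin n → ℂ)

theorem mul_eq : mono π c * mono τ c' = mono (π.trans τ) (fun i => c i * c' (π i)) := by
  ext i j
  simp only [mono, Matrix.mul_apply, Matrix.of_apply]
  rw [Finset.sum_eq_single (π i)]
  · simp [Equiv.trans_apply, mul_ite]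
    rfl
  · intro k _ hk
    simp [hk]
  · simp

theorem eq_one {π : Equiv.Perm (Fin n)} {c : Fin n → ℂ} (hπ : ∀ i, π i = i)
    (hc : ∀ i, c i = 1) : mono π c = 1 := by
  ext i j
  simp only [mono, Matrix.of_apply, hπ, hc, Matrix.one_apply]
  by_cases h : j = i
  · simp [h]
  · rw [if_neg h, if_neg fun hc : i = j => h hc.symm]

theorem conjTranspose_eq :
    (mono π c)ᴴ = mono π⁻¹ (fun i => (starRingEnd ℂ) (c (π⁻¹ i))) := by
  ext i j
  simp only [mono, Matrix.conjTranspose_apply, Matrix.of_apply]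
  by_cases h : j = π⁻¹ i
  · subst h
    simp [Equiv.apply_symm_apply]
  · have h2 : i ≠ π j := fun hc => h (by simp [hc])
    simp [h, h2]
    exact fun hc => absurd hc h

theorem mem_unitary (hc : ∀ i, c i * (starRingEnd ℂ) (c i) = 1) :
    mono π c ∈ Matrix.unitaryGroup (Fin n) ℂ := by
  rw [Matrix.mem_unitaryGroup_iff]
  show mono π c * (mono π c)ᴴ = 1
  rw [conjTranspose_eq, mul_eq]
  refine eq_one (fun i => Equiv.symm_apply_apply _ _) fun i => ?_
  simpa using hc i

theorem det_eq : (mono π c).det = ((Equiv.Perm.sign π : ℤ) : ℂ) * ∏ i, c i := by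
  have h : mono π c = Matrix.diagonal c * Equiv.Perm.permMatrix ℂ π := by
    ext i j
    simp only [mono, Matrix.of_apply, Matrix.diagonal_mul, Equiv.Perm.permMatrix,
      PEquiv.toMatrix_apply, Equiv.toPEquiv_apply, Option.mem_def, Option.some.injEq, mul_ite,
      mul_one, mul_zero]
    congr 1
    exact propext ⟨fun h => h.symm, fun h => h.symm⟩
  rw [h, Matrix.det_mul, Matrix.det_diagonal, Matrix.det_permutation, mul_comm]

end mono

end SU3Inv

namespace SU3Inv

theorem charpoly_conj {n : ℕ} (P P' A : Matrix (Fin n) (Fin n) ℂ)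
    (h : P * P' = 1) (h' : P' * P = 1) :
    (P * A * P').charpoly = A.charpoly := by
  have hPP' : P.map Polynomial.C * P'.map Polynomial.C = 1 := by
    rw [← Matrix.map_mul, h, Matrix.map_one _ Polynomial.C_0 Polynomial.C_1]
  have key : (P * A * P').charmatrix
      = P.map Polynomial.C * A.charmatrix * P'.map Polynomial.C := by
    have hc : Matrix.scalar (Fin n) Polynomial.X * P.map Polynomial.C
        = P.map Polynomial.C * Matrix.scalar (Fin n) Polynomial.X :=
      (Matrix.scalar_commute Polynomial.X (fun r' => Commute.all _ _) _).eq
    rw [Matrix.charmatrix, Matrix.charmatrix, Matrix.mul_sub, Matrix.sub_mul]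
    congr 1
    · rw [← hc, mul_assoc, hPP', mul_one]
    · simp only [RingHom.mapMatrix_apply, Matrix.map_mul, mul_assoc]
  rw [Matrix.charpoly, Matrix.charpoly, key, Matrix.det_mul, Matrix.det_mul]
  calc (P.map Polynomial.C).det * A.charmatrix.det * (P'.map Polynomial.C).det
      = A.charmatrix.det * (P.map Polynomial.C * P'.map Polynomial.C).det := by
        rw [Matrix.det_mul]; ring
    _ = A.charmatrix.det := by rw [hPP', Matrix.det_one, mul_one]

theorem charpoly_diagonal {n : ℕ} (d : Fin n → ℂ) :
    (Matrix.diagonal d).charpoly = ∏ i, (Polynomial.X - Polynomial.C (d i)) := by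
  rw [Matrix.charpoly_of_upperTriangular _ (Matrix.blockTriangular_diagonal d)]
  simp

/-- the multiset of diagonal entries is invariant under inversion -/
theorem multiset_invariant {n : ℕ} (d : Fin n → ℂ)
    (h : (∏ i, (Polynomial.X - Polynomial.C (d i)))
      = ∏ i, (Polynomial.X - Polynomial.C ((d i)⁻¹))) :
    Multiset.map (fun i => (d i)⁻¹) Finset.univ.val = Multiset.map d Finset.univ.val := by
  have h1 : ((Multiset.map d Finset.univ.val).map fun a => Polynomial.X - Polynomial.C a).prod
      = ((Multiset.map (fun i => (d i)⁻¹) Finset.univ.val).map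
          fun a => Polynomial.X - Polynomial.C a).prod := by
    rw [Multiset.map_map, Multiset.map_map]
    exact h
  have := congrArg Polynomial.roots h1
  rwa [Polynomial.roots_multiset_prod_X_sub_C, Polynomial.roots_multiset_prod_X_sub_C,
    eq_comm] at this

theorem exists_matching {ι : Type*} [DecidableEq ι] (d : ι → ℂ) (s : Finset ι)
    (hs : (Multiset.map d s.val).map (fun x => x⁻¹) = Multiset.map d s.val) :
    ∃ π : ι → ι, (∀ i ∈ s, π i ∈ s) ∧ (∀ i, π (π i) = i) ∧
      (∀ i ∈ s, d (π i) = (d i)⁻¹) ∧ (∀ i ∉ s, π i = i) := by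
  induction s using Finset.strongInduction with
  | _ s ih =>
    rcases s.eq_empty_or_nonempty with rfl | ⟨a, ha⟩
    · exact ⟨fun i => i, by simp, fun i => rfl, by simp, fun i _ => rfl⟩
    have hda : d a ∈ Multiset.map d s.val := Multiset.mem_map_of_mem d ha
    by_cases hself : (d a)⁻¹ = d a
    · -- pair `a` with itself
      have hsub : s.erase a ⊂ s := Finset.erase_ssubset ha
      have hs' : (Multiset.map d (s.erase a).val).map (fun x => x⁻¹)
          = Multiset.map d (s.erase a).val := by
        rw [Finset.erase_val, Multiset.map_erase_of_mem _ _ ha,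
          Multiset.map_erase (fun x => x⁻¹) inv_injective _ _, hs, hself]
      obtain ⟨π, h1, h2, h3, h4⟩ := ih _ hsub hs'
      have hπa : π a = a := h4 a (Finset.notMem_erase a s)
      refine ⟨π, fun i hi => ?_, h2, fun i hi => ?_, fun i hi => h4 i fun hc => hi (Finset.mem_of_mem_erase hc)⟩
      · by_cases hia : i = a
        · subst hia; simp [hπa, hi]
        · exact Finset.mem_of_mem_erase (h1 i (Finset.mem_erase.mpr ⟨hia, hi⟩))
      · by_cases hia : i = a
        · subst hia; rw [hπa, hself]
        · exact h3 i (Finset.mem_erase.mpr ⟨hia, hi⟩)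
    · -- find a partner `b ≠ a`
      have hmem : (d a)⁻¹ ∈ Multiset.map d s.val := by
        rw [← hs]
        exact Multiset.mem_map_of_mem _ hda
      obtain ⟨b, hb, hdb⟩ := Multiset.mem_map.mp hmem
      have hb : b ∈ s := hb
      have hab : b ≠ a := fun hc => hself (by rw [← hdb, hc])
      set s' := (s.erase a).erase b with hs'def
      have hsub : s' ⊂ s :=
        lt_of_le_of_lt (Finset.erase_subset b (s.erase a)) (Finset.erase_ssubset ha)
      have hbmem : b ∈ s.erase a := Finset.mem_erase.mpr ⟨hab, hb⟩
      have hbv : b ∈ s.val.erase a := by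
        rw [Multiset.mem_erase_of_ne hab]
        exact hb
      have hs' : (Multiset.map d s'.val).map (fun x => x⁻¹) = Multiset.map d s'.val := by
        rw [hs'def, Finset.erase_val, Finset.erase_val,
          Multiset.map_erase_of_mem _ _ hbv,
          Multiset.map_erase_of_mem _ _ ha,
          Multiset.map_erase (fun x => x⁻¹) inv_injective _ _,
          Multiset.map_erase (fun x => x⁻¹) inv_injective _ _, hs, hdb, inv_inv,
          Multiset.erase_comm]
      obtain ⟨π, h1, h2, h3, h4⟩ := ih _ hsub hs'
      have hπout : ∀ j, j ∉ s' → π j = j := h4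
      have hπa : π a = a := h4 a (by simp [hs'def])
      have hπb : π b = b := h4 b (by simp [hs'def])
      classical
      refine ⟨fun i => if i = a then b else if i = b then a else π i, ?_, ?_, ?_, ?_⟩
      · intro i hi
        by_cases hia : i = a
        · simp [hia, hb]
        by_cases hib : i = b
        · simp [hib, hab, ha]
        · simp only [if_neg hia, if_neg hib]
          exact Finset.mem_of_mem_erase (Finset.mem_of_mem_erase
            (h1 i (by simp [hs'def, hia, hib, hi])))
      · intro i
        by_cases hia : i = a
        · simp [hia, hab, Ne.symm hab]
        by_cases hib : i = b
        · simp [hia, hib, Ne.symm hab]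
        · simp only [if_neg hia, if_neg hib]
          by_cases his : i ∈ s'
          · have hπi : π i ∈ s' := by
              have := h1 i his
              -- π i ∈ s' ?
              exact by
                have h2i := h2 i
                by_contra hc
                have := h4 _ hc
                rw [this] at h2i
                exact hc (by rw [← h2i] at his; exact his)
            have hπia : π i ≠ a := fun hc => by simp [hs'def, hc] at hπi
            have hπib : π i ≠ b := fun hc => by simp [hs'def, hc] at hπi
            simp [hπia, hπib, h2 i]
          · rw [hπout i his, if_neg hia, if_neg hib, hπout i his]
      · intro i hi
        by_cases hia : i = a
        · simp only [hia, if_pos rfl]; exact hdb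
        by_cases hib : i = b
        · show d (if i = a then b else if i = b then a else π i) = (d i)⁻¹
          rw [if_neg hia, if_pos hib, hib, hdb, inv_inv]
        · simp only [if_neg hia, if_neg hib]
          exact h3 i (by simp [hs'def, hia, hib, hi])
      · intro i hi
        have hia : i ≠ a := fun hc => hi (hc ▸ ha)
        have hib : i ≠ b := fun hc => hi (hc ▸ hb)
        show (if i = a then b else if i = b then a else π i) = i
        rw [if_neg hia, if_neg hib]
        exact hπout i (fun hc => hi (Finset.mem_of_mem_erase (Finset.mem_of_mem_erase hc)))

end SU3Inv

namespace SU3Inv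

variable {n : ℕ}

theorem mono_ext_eq {π τ : Equiv.Perm (Fin n)} {c c' : Fin n → ℂ} (hπ : ∀ i, π i = τ i)
    (hc : ∀ i, c i = c' i) : mono π c = mono τ c' := by
  ext i j
  simp only [mono, Matrix.of_apply, hπ, hc]

theorem diagonal_eq_mono (d : Fin n → ℂ) : Matrix.diagonal d = mono (Equiv.refl (Fin n)) d := by
  ext i j
  simp only [mono, Matrix.of_apply, Matrix.diagonal_apply, Equiv.refl_apply]
  by_cases h : i = j
  · simp [h]
  · rw [if_neg h]
    exact (if_neg fun hc : j = i => h hc.symm).symm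

theorem conj_transport {Q A : Matrix (Fin n) (Fin n) ℂ}
    (hQ : Q ∈ Matrix.unitaryGroup (Fin n) ℂ)
    (hA : A ∈ Matrix.unitaryGroup (Fin n) ℂ) (hdet : A.det = 1) (hinv : A * A = 1) :
    (Q * A * star Q) ∈ Matrix.specialUnitaryGroup (Fin n) ℂ ∧
      (Q * A * star Q) * (Q * A * star Q) = 1 := by
  have h1 : Q * star Q = 1 := Matrix.mem_unitaryGroup_iff.mp hQ
  have h2 : star Q * Q = 1 := Matrix.mem_unitaryGroup_iff'.mp hQ
  refine ⟨Matrix.mem_specialUnitaryGroup_iff.mpr ⟨mul_mem (mul_mem hQ hA) (Unitary.star_mem hQ), ?_⟩, ?_⟩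
  · rw [Matrix.det_mul, Matrix.det_mul, hdet, mul_one, ← Matrix.det_mul, h1, Matrix.det_one]
  · have e : Q * A * star Q * (Q * A * star Q) = Q * (A * (star Q * Q) * A) * star Q := by
      simp only [mul_assoc]
    rw [e, h2, mul_one, hinv, mul_one, h1]

/-- construction of two involutions multiplying to a diagonal matrix -/
theorem two_involutions (d : Fin n → ℂ) (π : Equiv.Perm (Fin n)) (c : Fin n → ℂ)
    (hd1 : ∀ i, d i * (starRingEnd ℂ) (d i) = 1)
    (hπd : ∀ i, d (π i) = (d i)⁻¹) (hππ : ∀ i, π (π i) = i)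
    (hdet : ∏ i, d i = 1)
    (hc1 : ∀ i, c i * (starRingEnd ℂ) (c i) = 1)
    (hc2 : ∀ i, c i * c (π i) = 1)
    (hcdet : ((Equiv.Perm.sign π : ℤ) : ℂ) * ∏ i, c i = 1) :
    ∃ J₁ J₂ : Matrix (Fin n) (Fin n) ℂ,
      J₁ ∈ Matrix.specialUnitaryGroup (Fin n) ℂ ∧
      J₂ ∈ Matrix.specialUnitaryGroup (Fin n) ℂ ∧
      J₁ * J₁ = 1 ∧ J₂ * J₂ = 1 ∧ Matrix.diagonal d = J₁ * J₂ := by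
  have hd0 : ∀ i, d i ≠ 0 := fun i h0 => by simpa [h0] using hd1 i
  have hpair : ∀ i, d i * d (π i) = 1 := fun i => by
    rw [hπd i]; exact mul_inv_cancel₀ (hd0 i)
  refine ⟨mono π c, mono π (fun i => c i * d (π i)), ?_, ?_, ?_, ?_, ?_⟩
  · refine Matrix.mem_specialUnitaryGroup_iff.mpr ⟨mono.mem_unitary π c hc1, ?_⟩
    rw [mono.det_eq]; exact hcdet
  · refine Matrix.mem_specialUnitaryGroup_iff.mpr
      ⟨mono.mem_unitary π _ (fun i => ?_), ?_⟩
    · have := hc1 i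
      have hh := hd1 (π i)
      calc c i * d (π i) * (starRingEnd ℂ) (c i * d (π i))
          = (c i * (starRingEnd ℂ) (c i)) * (d (π i) * (starRingEnd ℂ) (d (π i))) := by
            rw [map_mul]; ring
        _ = 1 := by rw [this, hh, mul_one]
    · rw [mono.det_eq, Finset.prod_mul_distrib]
      have hcomp : ∏ i, d (π i) = ∏ i, d i := Equiv.prod_comp π d
      calc ((Equiv.Perm.sign π : ℤ) : ℂ) * ((∏ i, c i) * ∏ i, d (π i))
          = (((Equiv.Perm.sign π : ℤ) : ℂ) * ∏ i, c i) * ∏ i, d (π i) := by ring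
        _ = 1 := by rw [hcdet, one_mul, hcomp, hdet]
  · rw [mono.mul_eq]
    exact mono.eq_one (fun i => by simp [Equiv.trans_apply, hππ i]) hc2
  · rw [mono.mul_eq]
    refine mono.eq_one (fun i => by simp [Equiv.trans_apply, hππ i]) fun i => ?_
    calc c i * d (π i) * (c (π i) * d (π (π i)))
        = c i * d (π i) * (c (π i) * d i) := by rw [hππ i]
      _ = (c i * c (π i)) * (d i * d (π i)) := by ring
      _ = 1 := by rw [hc2 i, hpair i, mul_one]
  · rw [mono.mul_eq, diagonal_eq_mono]
    refine (mono_ext_eq (fun i => by simp [Equiv.trans_apply, hππ i]) fun i => ?_).symm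
    calc c i * (c (π i) * d (π (π i))) = (c i * c (π i)) * d i := by rw [hππ i]; ring
      _ = d i := by rw [hc2 i, one_mul]

end SU3Inv

namespace SU3Inv

set_option maxHeartbeats 2000000 in
theorem three_involutions {n : ℕ} (hn : 2 < n) (d : Fin n → ℂ) (π : Equiv.Perm (Fin n))
    (hd1 : ∀ i, d i * (starRingEnd ℂ) (d i) = 1)
    (hπd : ∀ i, d (π i) = (d i)⁻¹) (hππ : ∀ i, π (π i) = i)
    (hdet : ∏ i, d i = 1)
    (hfree : ∀ i, π i ≠ i)
    (hsign : Equiv.Perm.sign π = -1) :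
    ∃ I₁ I₂ I₃ : Matrix (Fin n) (Fin n) ℂ,
      I₁ ∈ Matrix.specialUnitaryGroup (Fin n) ℂ ∧
      I₂ ∈ Matrix.specialUnitaryGroup (Fin n) ℂ ∧
      I₃ ∈ Matrix.specialUnitaryGroup (Fin n) ℂ ∧
      I₁ * I₁ = 1 ∧ I₂ * I₂ = 1 ∧ I₃ * I₃ = 1 ∧
      Matrix.diagonal d = I₁ * I₂ * I₃ := by
  classical
  have hd0 : ∀ i, d i ≠ 0 := fun i h0 => by simpa [h0] using hd1 i
  have hpair : ∀ i, d i * d (π i) = 1 := fun i => by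
    rw [hπd i]; exact mul_inv_cancel₀ (hd0 i)
  have ha0 : 0 < n := by omega
  set a : Fin n := ⟨0, ha0⟩ with hadef
  set b := π a with hbdef
  have hba : b ≠ a := hfree a
  have hπb : π b = a := hππ a
  have hexists : ∃ x : Fin n, x ≠ a ∧ x ≠ b := by
    by_contra hx
    push_neg at hx
    have hsub : (Finset.univ : Finset (Fin n)) ⊆ {a, b} := by
      intro x _
      by_cases hxa : x = a
      · simp [hxa]
      · simp [hx x hxa]
    have hcard := Finset.card_le_card hsub
    have h2 : ({a, b} : Finset (Fin n)).card ≤ 2 := by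
      refine (Finset.card_insert_le _ _).trans ?_
      simp
    rw [Finset.card_univ, Fintype.card_fin] at hcard
    omega
  obtain ⟨a', ha'a, ha'b⟩ := hexists
  set b' := π a' with hb'def
  have hπb' : π b' = a' := hππ a'
  have hb'a' : b' ≠ a' := hfree a'
  have hb'a : b' ≠ a := fun hc => ha'b (π.injective ((hb'def.symm.trans hc).trans hπb.symm))
  have hb'b : b' ≠ b := fun hc => ha'a (π.injective (hb'def.symm.trans (hc.trans hbdef)))
  have hπa_iff : ∀ i, π i = a ↔ i = b := fun i =>
    ⟨fun h => π.injective (h.trans hπb.symm), fun h => h ▸ hπb⟩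
  have hπb_iff : ∀ i, π i = b ↔ i = a := fun i =>
    ⟨fun h => π.injective (h.trans hbdef), fun h => h ▸ hbdef.symm⟩
  have hπa'_iff : ∀ i, π i = a' ↔ i = b' := fun i =>
    ⟨fun h => π.injective (h.trans hπb'.symm), fun h => h ▸ hπb'⟩
  have hπb'_iff : ∀ i, π i = b' ↔ i = a' := fun i =>
    ⟨fun h => π.injective (h.trans hb'def), fun h => h ▸ hb'def.symm⟩
  set σ := Equiv.swap a' b' with hσdef
  set σ' := Equiv.swap a b with hσ'def
  -- values of the swaps
  have hσa : σ a = a := Equiv.swap_apply_of_ne_of_ne ha'a.symm hb'a.symm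
  have hσb : σ b = b := Equiv.swap_apply_of_ne_of_ne ha'b.symm hb'b.symm
  have hσa' : σ a' = b' := Equiv.swap_apply_left a' b'
  have hσb' : σ b' = a' := Equiv.swap_apply_right a' b'
  have hσ'a : σ' a = b := Equiv.swap_apply_left a b
  have hσ'b : σ' b = a := Equiv.swap_apply_right a b
  have hσ'a' : σ' a' = a' := Equiv.swap_apply_of_ne_of_ne ha'a ha'b
  have hσ'b' : σ' b' = b' := Equiv.swap_apply_of_ne_of_ne hb'a hb'b
  have hσx : ∀ i, i ≠ a' → i ≠ b' → σ i = i := fun i h1 h2 =>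
    Equiv.swap_apply_of_ne_of_ne h1 h2
  have hσ'x : ∀ i, i ≠ a → i ≠ b → σ' i = i := fun i h1 h2 =>
    Equiv.swap_apply_of_ne_of_ne h1 h2
  have hπ₁ : ∀ i, (π * σ) i = π (σ i) := fun i => rfl
  have hπ₂ : ∀ i, (π * σ') i = π (σ' i) := fun i => rfl
  have hτ : ∀ i, (σ' * σ) i = σ' (σ i) := fun i => rfl
  set c₁ := fun i => if i = a then d a else if i = b then d b else (1 : ℂ) with hc₁def
  set c₂ := fun i => if i = a' then d a' else if i = b' then d b'
    else if i = a then (1:ℂ) else if i = b then 1 else d (π i) with hc₂def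
  -- coefficient values
  have hc₁a : c₁ a = d a := by simp [hc₁def]
  have hc₁b : c₁ b = d b := by simp [hc₁def, hba]
  have hc₁a' : c₁ a' = 1 := by simp [hc₁def, ha'a, ha'b]
  have hc₁b' : c₁ b' = 1 := by simp [hc₁def, hb'a, hb'b]
  have hc₁x : ∀ i, i ≠ a → i ≠ b → c₁ i = 1 := fun i h1 h2 => by simp [hc₁def, h1, h2]
  have hc₂a : c₂ a = 1 := by simp [hc₂def, ha'a.symm, hb'a.symm]
  have hc₂b : c₂ b = 1 := by simp [hc₂def, ha'b.symm, hb'b.symm, hba]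
  have hc₂a' : c₂ a' = d a' := by simp [hc₂def]
  have hc₂b' : c₂ b' = d b' := by simp [hc₂def, hb'a']
  have hc₂x : ∀ i, i ≠ a → i ≠ b → i ≠ a' → i ≠ b' → c₂ i = d (π i) :=
    fun i h1 h2 h3 h4 => by simp [hc₂def, h1, h2, h3, h4]
  -- unimodularity of coefficients
  have hc₁u : ∀ i, c₁ i * (starRingEnd ℂ) (c₁ i) = 1 := by
    intro i
    by_cases h1 : i = a
    · rw [h1, hc₁a]; exact hd1 a
    by_cases h2 : i = b
    · rw [h2, hc₁b]; exact hd1 b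
    · rw [hc₁x i h1 h2]; simp
  have hc₂u : ∀ i, c₂ i * (starRingEnd ℂ) (c₂ i) = 1 := by
    intro i
    by_cases h3 : i = a'
    · rw [h3, hc₂a']; exact hd1 a'
    by_cases h4 : i = b'
    · rw [h4, hc₂b']; exact hd1 b'
    by_cases h1 : i = a
    · rw [h1, hc₂a]; simp
    by_cases h2 : i = b
    · rw [h2, hc₂b]; simp
    · rw [hc₂x i h1 h2 h3 h4]; exact hd1 (π i)
  refine ⟨mono (π * σ) c₁, mono (π * σ') c₂, mono (σ' * σ) (fun _ => 1), ?_, ?_, ?_, ?_, ?_, ?_, ?_⟩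
  · refine Matrix.mem_specialUnitaryGroup_iff.mpr ⟨mono.mem_unitary (π * σ) c₁ hc₁u, ?_⟩
    rw [mono.det_eq]
    have hs : Equiv.Perm.sign (π * σ) = 1 := by
      rw [Equiv.Perm.sign_mul, hsign, hσdef, Equiv.Perm.sign_swap hb'a'.symm]
      decide
    have hp : ∏ i, c₁ i = d a * d b := by
      rw [← Finset.prod_subset (Finset.subset_univ ({a, b} : Finset (Fin n)))
        (fun x _ hx => ?_)]
      · rw [Finset.prod_pair hba.symm, hc₁a, hc₁b]
      · simp only [Finset.mem_insert, Finset.mem_singleton, not_or] at hx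
        exact hc₁x x hx.1 hx.2
    rw [hs, hp, hbdef, hpair a]
    simp
  · refine Matrix.mem_specialUnitaryGroup_iff.mpr ⟨mono.mem_unitary (π * σ') c₂ hc₂u, ?_⟩
    rw [mono.det_eq]
    have hs : Equiv.Perm.sign (π * σ') = 1 := by
      rw [Equiv.Perm.sign_mul, hsign, hσ'def, Equiv.Perm.sign_swap hba.symm]
      decide
    set s4 : Finset (Fin n) := {a, b, a', b'} with hs4def
    have hmem_s4 : ∀ i, i ∈ s4 ↔ i = a ∨ i = b ∨ i = a' ∨ i = b' := by
      intro i; simp [hs4def]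
    have hnotmem1 : a ∉ ({b, a', b'} : Finset (Fin n)) := by
      simp [hba.symm, ha'a.symm, hb'a.symm, Ne.symm]
    have hnotmem2 : b ∉ ({a', b'} : Finset (Fin n)) := by
      simp [ha'b.symm, hb'b.symm, Ne.symm]
    have hps4c₂ : ∏ i ∈ s4, c₂ i = 1 := by
      rw [hs4def, Finset.prod_insert hnotmem1, Finset.prod_insert hnotmem2,
        Finset.prod_pair hb'a'.symm, hc₂a, hc₂b, hc₂a', hc₂b', hb'def, hpair a']
      ring
    have hps4d : ∏ i ∈ s4, d i = 1 := by
      rw [hs4def, Finset.prod_insert hnotmem1, Finset.prod_insert hnotmem2,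
        Finset.prod_pair hb'a'.symm, hbdef, hb'def]
      rw [show d a * (d (π a) * (d a' * d (π a'))) = (d a * d (π a)) * (d a' * d (π a')) by ring,
        hpair a, hpair a', mul_one]
    have hpcompl_d : ∏ i ∈ s4ᶜ, d i = 1 := by
      have := Finset.prod_mul_prod_compl s4 d
      rw [hps4d, one_mul, hdet] at this
      exact this
    have hs4c : ∀ j, π j ∈ s4 ↔ j ∈ s4 := by
      intro j
      rw [hmem_s4, hmem_s4, hπa_iff, hπb_iff, hπa'_iff, hπb'_iff]
      tauto
    have himg : Finset.image (fun i => π i) s4ᶜ = s4ᶜ := by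
      ext j
      simp only [Finset.mem_image, Finset.mem_compl]
      constructor
      · rintro ⟨i, hi, rfl⟩
        exact fun hc => hi ((hs4c i).mp hc)
      · intro hj
        exact ⟨π j, fun hc => hj ((hs4c j).mp hc), hππ j⟩
    have hpcompl : ∏ i ∈ s4ᶜ, c₂ i = 1 := by
      have he : ∏ i ∈ s4ᶜ, c₂ i = ∏ i ∈ s4ᶜ, d (π i) := by
        refine Finset.prod_congr rfl fun i hi => ?_
        rw [Finset.mem_compl, hmem_s4] at hi
        push_neg at hi
        exact hc₂x i hi.1 hi.2.1 hi.2.2.1 hi.2.2.2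
      rw [he, ← Finset.prod_image (fun x _ y _ h => π.injective h), himg]
      exact hpcompl_d
    have hp : ∏ i, c₂ i = 1 := by
      rw [← Finset.prod_mul_prod_compl s4 c₂, hps4c₂, hpcompl, one_mul]
    rw [hs, hp]
    simp
  · refine Matrix.mem_specialUnitaryGroup_iff.mpr
      ⟨mono.mem_unitary (σ' * σ) _ (fun i => by simp), ?_⟩
    rw [mono.det_eq]
    have hs : Equiv.Perm.sign (σ' * σ) = 1 := by
      rw [Equiv.Perm.sign_mul, hσdef, hσ'def, Equiv.Perm.sign_swap hba.symm,
        Equiv.Perm.sign_swap hb'a'.symm]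
      decide
    rw [hs, Finset.prod_const_one]
    simp
  · -- I₁ * I₁ = 1
    rw [mono.mul_eq]
    refine mono.eq_one (fun i => ?_) (fun i => ?_)
    · rw [Equiv.trans_apply, hπ₁, hπ₁]
      by_cases h3 : i = a'
      · rw [h3, hσa', hπb', hσa', hπb']
      by_cases h4 : i = b'
      · rw [h4, hσb', ← hb'def, hσb', ← hb'def]
      · have hne1 : π i ≠ a' := fun hc => h4 ((hπa'_iff i).mp hc)
        have hne2 : π i ≠ b' := fun hc => h3 ((hπb'_iff i).mp hc)
        rw [hσx i h3 h4, hσx (π i) hne1 hne2, hππ i]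
    · rw [hπ₁]
      by_cases h1 : i = a
      · rw [h1, hσa, ← hbdef, hc₁a, hc₁b, hbdef]
        exact hpair a
      by_cases h2 : i = b
      · rw [h2, hσb, hπb, hc₁b, hc₁a, mul_comm, hbdef]
        exact hpair a
      by_cases h3 : i = a'
      · rw [h3, hσa', hπb', hc₁a', mul_one]
      by_cases h4 : i = b'
      · rw [h4, hσb', ← hb'def, hc₁b', mul_one]
      · have hne1 : π i ≠ a := fun hc => h2 ((hπa_iff i).mp hc)
        have hne2 : π i ≠ b := fun hc => h1 ((hπb_iff i).mp hc)
        rw [hσx i h3 h4, hc₁x i h1 h2, hc₁x (π i) hne1 hne2, mul_one]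
  · -- I₂ * I₂ = 1
    rw [mono.mul_eq]
    refine mono.eq_one (fun i => ?_) (fun i => ?_)
    · rw [Equiv.trans_apply, hπ₂, hπ₂]
      by_cases h1 : i = a
      · rw [h1, hσ'a, hπb, hσ'a, hπb]
      by_cases h2 : i = b
      · rw [h2, hσ'b, ← hbdef, hσ'b, ← hbdef]
      by_cases h3 : i = a'
      · rw [h3, hσ'a', ← hb'def, hσ'b', hπb']
      by_cases h4 : i = b'
      · rw [h4, hσ'b', hπb', hσ'a', ← hb'def]
      · have hne1 : π i ≠ a := fun hc => h2 ((hπa_iff i).mp hc)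
        have hne2 : π i ≠ b := fun hc => h1 ((hπb_iff i).mp hc)
        rw [hσ'x i h1 h2, hσ'x (π i) hne1 hne2, hππ i]
    · rw [hπ₂]
      by_cases h1 : i = a
      · rw [h1, hσ'a, hπb, hc₂a, mul_one]
      by_cases h2 : i = b
      · rw [h2, hσ'b, ← hbdef, hc₂b, mul_one]
      by_cases h3 : i = a'
      · rw [h3, hσ'a', ← hb'def, hc₂a', hc₂b', hb'def]
        exact hpair a'
      by_cases h4 : i = b'
      · rw [h4, hσ'b', hπb', hc₂b', hc₂a', mul_comm, hb'def]
        exact hpair a'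
      · have hne1 : π i ≠ a := fun hc => h2 ((hπa_iff i).mp hc)
        have hne2 : π i ≠ b := fun hc => h1 ((hπb_iff i).mp hc)
        have hne3 : π i ≠ a' := fun hc => h4 ((hπa'_iff i).mp hc)
        have hne4 : π i ≠ b' := fun hc => h3 ((hπb'_iff i).mp hc)
        rw [hσ'x i h1 h2, hc₂x i h1 h2 h3 h4, hc₂x (π i) hne1 hne2 hne3 hne4, hππ i,
          mul_comm]
        exact hpair i
  · -- I₃ * I₃ = 1
    rw [mono.mul_eq]
    refine mono.eq_one (fun i => ?_) (fun i => by simp)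
    rw [Equiv.trans_apply, hτ, hτ]
    by_cases h1 : i = a
    · rw [h1, hσa, hσ'a, hσb, hσ'b]
    by_cases h2 : i = b
    · rw [h2, hσb, hσ'b, hσa, hσ'a]
    by_cases h3 : i = a'
    · rw [h3, hσa', hσ'b', hσb', hσ'a']
    by_cases h4 : i = b'
    · rw [h4, hσb', hσ'a', hσa', hσ'b']
    · rw [hσx i h3 h4, hσ'x i h1 h2, hσx i h3 h4, hσ'x i h1 h2]
  · -- product equals diagonal
    rw [mono.mul_eq, mono.mul_eq, diagonal_eq_mono]
    refine mono_ext_eq (fun i => ?_) (fun i => ?_)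
    · rw [Equiv.refl_apply, Equiv.trans_apply, Equiv.trans_apply, hπ₁, hπ₂, hτ]
      by_cases h1 : i = a
      · rw [h1, hσa, ← hbdef, hσ'b, ← hbdef, hσb, hσ'b]
      by_cases h2 : i = b
      · rw [h2, hσb, hπb, hσ'a, hπb, hσa, hσ'a]
      by_cases h3 : i = a'
      · rw [h3, hσa', hπb', hσ'a', ← hb'def, hσb', hσ'a']
      by_cases h4 : i = b'
      · rw [h4, hσb', ← hb'def, hσ'b', hπb', hσa', hσ'b']
      · have hne1 : π i ≠ a := fun hc => h2 ((hπa_iff i).mp hc)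
        have hne2 : π i ≠ b := fun hc => h1 ((hπb_iff i).mp hc)
        have hne3 : π i ≠ a' := fun hc => h4 ((hπa'_iff i).mp hc)
        have hne4 : π i ≠ b' := fun hc => h3 ((hπb'_iff i).mp hc)
        rw [hσx i h3 h4, hσ'x (π i) hne1 hne2, hππ i, hσx i h3 h4, hσ'x i h1 h2]
    · show d i = c₁ i * c₂ ((π * σ) i) * 1
      rw [hπ₁]
      by_cases h1 : i = a
      · rw [h1, hσa, ← hbdef, hc₁a, hc₂b, mul_one, mul_one]
      by_cases h2 : i = b
      · rw [h2, hσb, hπb, hc₁b, hc₂a, mul_one, mul_one]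
      by_cases h3 : i = a'
      · rw [h3, hσa', hπb', hc₁a', hc₂a', one_mul, mul_one]
      by_cases h4 : i = b'
      · rw [h4, hσb', ← hb'def, hc₁b', hc₂b', one_mul, mul_one]
      · have hne1 : π i ≠ a := fun hc => h2 ((hπa_iff i).mp hc)
        have hne2 : π i ≠ b := fun hc => h1 ((hπb_iff i).mp hc)
        have hne3 : π i ≠ a' := fun hc => h4 ((hπa'_iff i).mp hc)
        have hne4 : π i ≠ b' := fun hc => h3 ((hπb'_iff i).mp hc)
        rw [hσx i h3 h4, hc₁x i h1 h2, hc₂x (π i) hne1 hne2 hne3 hne4, hππ i,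
          one_mul, mul_one]

end SU3Inv

open SU3Inv in
set_option maxHeartbeats 2000000 in
/-- If `n ≡ 2 (mod 4)`, `n > 2`, and `T ∈ SU(n)` is reversible but is not a product of
two involutions in `SU(n)`, then `T` is a product of three involutions in `SU(n)`. -/
theorem reversible_su_not_strongly_reversible_product_three_involutions
    (n : ℕ) (hn : 2 < n) (hmod : n % 4 = 2)
    (T : Matrix (Fin n) (Fin n) ℂ)
    (hT : T ∈ Matrix.specialUnitaryGroup (Fin n) ℂ)
    (hrev : ∃ g : Matrix (Fin n) (Fin n) ℂ,
      g ∈ Matrix.unitaryGroup (Fin n) ℂ ∧ g * T * g⁻¹ = T⁻¹)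
    (hnot : ¬ ∃ J₁ J₂ : Matrix (Fin n) (Fin n) ℂ,
      J₁ ∈ Matrix.specialUnitaryGroup (Fin n) ℂ ∧
      J₂ ∈ Matrix.specialUnitaryGroup (Fin n) ℂ ∧
      J₁ * J₁ = 1 ∧ J₂ * J₂ = 1 ∧ T = J₁ * J₂) :
    ∃ I₁ I₂ I₃ : Matrix (Fin n) (Fin n) ℂ,
      I₁ ∈ Matrix.specialUnitaryGroup (Fin n) ℂ ∧
      I₂ ∈ Matrix.specialUnitaryGroup (Fin n) ℂ ∧
      I₃ ∈ Matrix.specialUnitaryGroup (Fin n) ℂ ∧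
      I₁ * I₁ = 1 ∧ I₂ * I₂ = 1 ∧ I₃ * I₃ = 1 ∧
      T = I₁ * I₂ * I₃ := by
  classical
  obtain ⟨hTu, hTdet⟩ := Matrix.mem_specialUnitaryGroup_iff.mp hT
  have hQ : diagQ hTu ∈ Matrix.unitaryGroup (Fin n) ℂ := diagQ_mem hTu
  set Q := diagQ hTu with hQdef
  set d := diagD hTu with hddef
  have hQ1 : Q * star Q = 1 := Matrix.mem_unitaryGroup_iff.mp hQ
  have hQ2 : star Q * Q = 1 := Matrix.mem_unitaryGroup_iff'.mp hQ
  have hspec : T = Q * Matrix.diagonal d * star Q := unitary_spectral_theorem hTu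
  have hDu : Matrix.diagonal d ∈ Matrix.unitaryGroup (Fin n) ℂ := by
    have he : Matrix.diagonal d = star Q * T * Q := by
      rw [hspec]
      have e : star Q * (Q * Matrix.diagonal d * star Q) * Q
          = star Q * Q * (Matrix.diagonal d * (star Q * Q)) := by simp only [mul_assoc]
      rw [e, hQ2, one_mul, mul_one]
    rw [he]
    exact mul_mem (mul_mem (Unitary.star_mem hQ) hTu) hQ
  have hd1 : ∀ i, d i * (starRingEnd ℂ) (d i) = 1 := by
    intro i
    have h := Matrix.mem_unitaryGroup_iff.mp hDu
    have h2 : (Matrix.diagonal d * star (Matrix.diagonal d)) i i = (1 : Matrix (Fin n) (Fin n) ℂ) i i := by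
      rw [h]
    simpa [Matrix.star_eq_conjTranspose, Matrix.diagonal_conjTranspose,
      Matrix.diagonal_mul_diagonal, Matrix.one_apply_eq, Matrix.diagonal_apply_eq,
      Pi.mul_apply, Pi.star_apply] using h2
  have hd0 : ∀ i, d i ≠ 0 := fun i h0 => by simpa [h0] using hd1 i
  have hdet_d : ∏ i, d i = 1 := by
    have h1 : (Q * Matrix.diagonal d * star Q).det = 1 := by rw [← hspec]; exact hTdet
    rw [Matrix.det_mul, Matrix.det_mul, Matrix.det_diagonal] at h1
    have h2 : Q.det * (star Q).det = 1 := by rw [← Matrix.det_mul, hQ1, Matrix.det_one]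
    calc ∏ i, d i = (Q.det * (star Q).det) * ∏ i, d i := by rw [h2, one_mul]
      _ = Q.det * (∏ i, d i) * (star Q).det := by ring
      _ = 1 := h1
  obtain ⟨g, hg, hgT⟩ := hrev
  have hg1 : g * star g = 1 := Matrix.mem_unitaryGroup_iff.mp hg
  have hg2 : star g * g = 1 := Matrix.mem_unitaryGroup_iff'.mp hg
  have hginv : g⁻¹ = star g := Matrix.inv_eq_left_inv hg2
  have hgT' : g * T * star g = T⁻¹ := by rw [← hginv]; exact hgT
  have hDD : Matrix.diagonal (fun i => (d i)⁻¹) * Matrix.diagonal d = 1 := by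
    ext i j
    rw [Matrix.diagonal_mul_diagonal]
    by_cases h : i = j
    · subst h
      rw [Matrix.diagonal_apply_eq, Matrix.one_apply_eq]
      exact inv_mul_cancel₀ (hd0 i)
    · rw [Matrix.diagonal_apply_ne _ h, Matrix.one_apply_ne h]
  have hTinv : T⁻¹ = Q * Matrix.diagonal (fun i => (d i)⁻¹) * star Q := by
    apply Matrix.inv_eq_left_inv
    rw [hspec]
    have e : (Q * Matrix.diagonal (fun i => (d i)⁻¹) * star Q) * (Q * Matrix.diagonal d * star Q)
        = Q * (Matrix.diagonal (fun i => (d i)⁻¹) * (star Q * Q) * Matrix.diagonal d) * star Q := by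
      simp only [mul_assoc]
    rw [e, hQ2, mul_one, hDD, mul_one, hQ1]
  have hcpT : T.charpoly = (Matrix.diagonal d).charpoly := by
    rw [hspec]; exact charpoly_conj Q (star Q) _ hQ1 hQ2
  have hcpTinv : T⁻¹.charpoly = (Matrix.diagonal (fun i => (d i)⁻¹)).charpoly := by
    rw [hTinv]; exact charpoly_conj Q (star Q) _ hQ1 hQ2
  have hcprev : T⁻¹.charpoly = T.charpoly := by
    rw [← hgT']; exact charpoly_conj g (star g) T hg1 hg2
  have hpoly : (∏ i, (Polynomial.X - Polynomial.C (d i)))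
      = ∏ i, (Polynomial.X - Polynomial.C ((d i)⁻¹)) := by
    rw [← charpoly_diagonal, ← charpoly_diagonal, ← hcpT, ← hcpTinv, hcprev]
  have hmult := multiset_invariant d hpoly
  obtain ⟨π₀, -, hπ₀inv, hπ₀d, -⟩ := exists_matching d Finset.univ (by
    rw [Multiset.map_map]
    exact hmult)
  set π : Equiv.Perm (Fin n) := Function.Involutive.toPerm π₀ hπ₀inv with hπdef
  have hπap : ∀ i, π i = π₀ i := fun i => rfl
  have hπd : ∀ i, d (π i) = (d i)⁻¹ := fun i => hπ₀d i (Finset.mem_univ i)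
  have hππ : ∀ i, π (π i) = i := fun i => hπ₀inv i
  -- helper to derive contradiction from a two-involution decomposition of `diagonal d`
  have hcontr : ∀ c : Fin n → ℂ, (∀ i, c i * (starRingEnd ℂ) (c i) = 1) →
      (∀ i, c i * c (π i) = 1) → ((Equiv.Perm.sign π : ℤ) : ℂ) * ∏ i, c i = 1 → False := by
    intro c hc1 hc2 hcdet
    obtain ⟨J₁, J₂, hJ₁, hJ₂, hJ₁i, hJ₂i, hDJ⟩ :=
      two_involutions d π c hd1 hπd hππ hdet_d hc1 hc2 hcdet
    obtain ⟨hJ₁u, hJ₁d⟩ := Matrix.mem_specialUnitaryGroup_iff.mp hJ₁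
    obtain ⟨hJ₂u, hJ₂d⟩ := Matrix.mem_specialUnitaryGroup_iff.mp hJ₂
    obtain ⟨hm1, hs1⟩ := conj_transport hQ hJ₁u hJ₁d hJ₁i
    obtain ⟨hm2, hs2⟩ := conj_transport hQ hJ₂u hJ₂d hJ₂i
    refine hnot ⟨Q * J₁ * star Q, Q * J₂ * star Q, hm1, hm2, hs1, hs2, ?_⟩
    rw [hspec, hDJ]
    have e : (Q * J₁ * star Q) * (Q * J₂ * star Q)
        = Q * (J₁ * (star Q * Q) * J₂) * star Q := by simp only [mul_assoc]
    rw [e, hQ2, mul_one]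
  by_cases hfix : ∃ i₀, π i₀ = i₀
  · exfalso
    obtain ⟨i₀, hi₀⟩ := hfix
    set ε : ℂ := ((Equiv.Perm.sign π : ℤ) : ℂ) with hεdef
    have hε : ε = 1 ∨ ε = -1 := by
      rcases Int.units_eq_one_or (Equiv.Perm.sign π) with h | h <;>
        rw [hεdef, h] <;> norm_num
    have hε2 : ε * ε = 1 := by rcases hε with h | h <;> rw [h] <;> norm_num
    have hεc : (starRingEnd ℂ) ε = ε := by rcases hε with h | h <;> rw [h] <;> simp
    have hπi₀ : ∀ i, i ≠ i₀ → π i ≠ i₀ := fun i hi hc =>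
      hi (π.injective (hc.trans hi₀.symm))
    refine hcontr (fun i => if i = i₀ then ε else 1) (fun i => ?_) (fun i => ?_) ?_
    · by_cases h : i = i₀
      · simp [h, hεc, hε2]
      · simp [h]
    · by_cases h : i = i₀
      · simp [h, hi₀, hε2]
      · simp [h, hπi₀ i h]
    · have hp : (∏ i, if i = i₀ then ε else 1) = ε := by
        rw [Finset.prod_ite_eq' Finset.univ i₀ (fun _ => ε)]
        simp
      rw [hp, hεdef]
      rcases Int.units_eq_one_or (Equiv.Perm.sign π) with h | h <;> rw [h] <;> simp
  · push_neg at hfix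
    rcases Int.units_eq_one_or (Equiv.Perm.sign π) with hsgn | hsgn
    · exfalso
      refine hcontr (fun _ => 1) (fun i => by simp) (fun i => by simp) ?_
      rw [hsgn]
      simp
    · obtain ⟨I₁, I₂, I₃, hI₁, hI₂, hI₃, hI₁i, hI₂i, hI₃i, hDI⟩ :=
        three_involutions hn d π hd1 hπd hππ hdet_d hfix hsgn
      obtain ⟨hI₁u, hI₁d⟩ := Matrix.mem_specialUnitaryGroup_iff.mp hI₁
      obtain ⟨hI₂u, hI₂d⟩ := Matrix.mem_specialUnitaryGroup_iff.mp hI₂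
      obtain ⟨hI₃u, hI₃d⟩ := Matrix.mem_specialUnitaryGroup_iff.mp hI₃
      obtain ⟨hm1, hs1⟩ := conj_transport hQ hI₁u hI₁d hI₁i
      obtain ⟨hm2, hs2⟩ := conj_transport hQ hI₂u hI₂d hI₂i
      obtain ⟨hm3, hs3⟩ := conj_transport hQ hI₃u hI₃d hI₃i
      refine ⟨Q * I₁ * star Q, Q * I₂ * star Q, Q * I₃ * star Q,
        hm1, hm2, hm3, hs1, hs2, hs3, ?_⟩
      rw [hspec, hDI]
      have e : (Q * I₁ * star Q) * (Q * I₂ * star Q) * (Q * I₃ * star Q)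
          = Q * (I₁ * (star Q * Q) * I₂ * (star Q * Q) * I₃) * star Q := by
        simp only [mul_assoc]
      rw [e, hQ2, mul_one, mul_one]
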